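/- Fix a set X and a subset B ⊆ X, and consider the semigroup PT(X,B) = {f : X ⇀ X : ran(f) ⊆ B} of partial self-maps of X with image contained in B, under composition of partial functions. Then an element f ∈ PT(X,B) is regular in PT(X,B) (i.e., there exists g : X ⇀ X with ran(g) ⊆ B and f = f⬝g⬝f) if and only if B saturates ker(f), i.e., for every x ∈ dom(f) there exists y ∈ B with y ∈ dom(f) and f(y) = f(x). Moreover, the set of regular elements of PT(X,B) is closed under composition (it is a subsemigroup). -/

import Mathlib

/-- `f` is a regular element of the semigroup `PT(X,B)` of partial self-maps of `X` with image
contained in `B`, under composition: `ran f ⊆ B` and `f = f⬝g⬝f` for some `g` with `ran g ⊆ B`. -/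
def RegPTXB {X : Type*} (B : Set X) (f : X →. X) : Prop :=
  f.ran ⊆ B ∧ ∃ g : X →. X, g.ran ⊆ B ∧ f = f.comp (g.comp f)

/-- For `f ∈ PT(X,B)` (i.e. `ran f ⊆ B`), `f` is regular in `PT(X,B)` iff
`B` saturates `ker f` (every kernel class of `f` meets `B`); moreover the set of regular
elements of `PT(X,B)` is closed under composition. -/
theorem RegPTXB_iff_and_subsemigroup {X : Type*} (B : Set X) :
    (∀ f : X →. X, f.ran ⊆ B →
      ((∃ g : X →. X, g.ran ⊆ B ∧ f = f.comp (g.comp f)) ↔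
        ∀ x ∈ f.Dom, ∃ y ∈ B, y ∈ f.Dom ∧ f y = f x)) ∧
    (∀ f g : X →. X, RegPTXB B f → RegPTXB B g → RegPTXB B (g.comp f)) := by
  have main : ∀ f : X →. X, f.ran ⊆ B →
      ((∃ g : X →. X, g.ran ⊆ B ∧ f = f.comp (g.comp f)) ↔
        ∀ x ∈ f.Dom, ∃ y ∈ B, y ∈ f.Dom ∧ f y = f x) := by
    intro f hf
    constructor
    · rintro ⟨g, hg, hfg⟩ x hx
      rw [PFun.mem_dom] at hx
      obtain ⟨a, ha⟩ := hx
      have h1 : a ∈ (f.comp (g.comp f)) x := by rw [← hfg]; exact ha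
      erw [PFun.comp_apply, Part.mem_bind_iff] at h1
      obtain ⟨c, hc, hac⟩ := h1
      erw [PFun.comp_apply, Part.mem_bind_iff] at hc
      obtain ⟨a', ha', hca'⟩ := hc
      refine ⟨c, hg ⟨a', hca'⟩, (PFun.mem_dom f c).2 ⟨a, hac⟩, ?_⟩
      rw [Part.eq_some_iff.2 hac, Part.eq_some_iff.2 ha]
    · intro hsat
      have aux : ∀ b, b ∈ f.ran → ∃ y, y ∈ B ∧ y ∈ f.Dom ∧ f y = Part.some b := by
        intro b hb
        obtain ⟨x, hx⟩ := hb
        obtain ⟨y, hyB, hyD, hyx⟩ := hsat x ((PFun.mem_dom f x).2 ⟨b, hx⟩)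
        exact ⟨y, hyB, hyD, by rw [hyx]; exact Part.eq_some_iff.2 hx⟩
      refine ⟨fun b => ⟨b ∈ f.ran, fun h => (aux b h).choose⟩, ?_, ?_⟩
      · rintro y ⟨b, h, rfl⟩
        exact (aux b h).choose_spec.1
      · apply PFun.ext
        intro x b
        erw [PFun.comp_apply, Part.mem_bind_iff]
        constructor
        · intro hb
          refine ⟨(aux b ⟨x, hb⟩).choose, ?_, ?_⟩
          · erw [PFun.comp_apply, Part.mem_bind_iff]
            exact ⟨b, hb, ⟨⟨x, hb⟩, rfl⟩⟩
          · have := (aux b ⟨x, hb⟩).choose_spec.2.2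
            rw [this]; exact Part.mem_some b
        · rintro ⟨c, hc, hbc⟩
          erw [PFun.comp_apply, Part.mem_bind_iff] at hc
          obtain ⟨a, haf, hcg⟩ := hc
          obtain ⟨h, rfl⟩ := hcg
          have := (aux a h).choose_spec.2.2
          rw [this] at hbc
          rw [Part.mem_some_iff] at hbc
          subst hbc
          exact haf
  refine ⟨main, ?_⟩
  intro f g hf hg
  have ranc : (g.comp f).ran ⊆ B := by
    rintro b ⟨x, hb⟩
    erw [PFun.comp_apply, Part.mem_bind_iff] at hb
    obtain ⟨a, _, hb⟩ := hb
    exact hg.1 ⟨a, hb⟩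
  refine ⟨ranc, (main _ ranc).2 ?_⟩
  intro x hx
  rw [PFun.mem_dom] at hx
  obtain ⟨b, hb⟩ := hx
  erw [PFun.comp_apply, Part.mem_bind_iff] at hb
  obtain ⟨a, haf, hbg⟩ := hb
  obtain ⟨y, hyB, hyD, hyx⟩ := (main f hf.1).1 hf.2 x ((PFun.mem_dom f x).2 ⟨a, haf⟩)
  refine ⟨y, hyB, ?_, ?_⟩
  · rw [PFun.mem_dom]
    refine ⟨b, ?_⟩
    erw [PFun.comp_apply, Part.mem_bind_iff]
    exact ⟨a, by rw [hyx]; exact haf, hbg⟩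
  · rw [PFun.comp_apply, PFun.comp_apply, hyx]
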